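/- Let $G$ be a finite group and $g \in G$. If every conjugacy class of $G$ contains an element $h$ with $g \in C_G(h)$, then $g \in Z(G)$. -/

import Mathlib

theorem mem_center_of_meets_all_classes {G : Type*} [Group G] [Finite G] (g : G)
    (h : ∀ c : G, ∃ h : G, IsConj c h ∧ g ∈ Subgroup.centralizer {h}) :
    g ∈ Subgroup.center G := by
  classical
  cases nonempty_fintype G
  set H := Subgroup.centralizer ({g} : Set G) with hHdef
  have key : ∀ u : G, ∃ x : G, x⁻¹ * u * x ∈ H := by
    intro u
    obtain ⟨k, hconj, hk⟩ := h u
    rw [isConj_iff] at hconj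
    obtain ⟨c, hc⟩ := hconj
    rw [Subgroup.mem_centralizer_iff] at hk
    have hgk : k * g = g * k := hk k rfl
    refine ⟨c⁻¹, ?_⟩
    rw [hHdef, Subgroup.mem_centralizer_iff]
    intro m hm
    rw [Set.mem_singleton_iff] at hm
    subst hm
    have : c⁻¹⁻¹ * u * c⁻¹ = k := by rw [inv_inv]; exact hc
    rw [this, ← hgk]
  set Hs : Finset G := (H : Set G).toFinset with hHs
  have h1H : (1 : G) ∈ Hs := by rw [hHs, Set.mem_toFinset]; exact H.one_mem
  have hn1 : 1 ≤ Hs.card := Finset.card_pos.mpr ⟨1, h1H⟩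
  set P : Finset (G × G) :=
    Finset.univ.filter (fun p : G × G => p.2 ≠ 1 ∧ p.1⁻¹ * p.2 * p.1 ∈ H) with hP
  have cardfst : P.card = ∑ x : G, (P.filter (fun p => p.1 = x)).card :=
    Finset.card_eq_sum_card_fiberwise (fun p _ => Finset.mem_univ _)
  have fibx : ∀ x : G, (P.filter (fun p => p.1 = x)).card = Hs.card - 1 := by
    intro x
    rw [← Finset.card_erase_of_mem h1H]
    apply Finset.card_bij (fun p _ => x⁻¹ * p.2 * x)
    · intro p hp
      simp only [hP, Finset.mem_filter, Finset.mem_univ, true_and] at hp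
      obtain ⟨⟨hu1, huH⟩, hax⟩ := hp
      rw [hax] at huH
      refine Finset.mem_erase.mpr ⟨?_, by simpa [hHs, Set.mem_toFinset] using huH⟩
      intro hcontra
      apply hu1
      calc p.2 = x * (x⁻¹ * p.2 * x) * x⁻¹ := by group
      _ = x * 1 * x⁻¹ := by rw [hcontra]
      _ = 1 := by group
    · intro p hp q hq heq
      simp only [hP, Finset.mem_filter, Finset.mem_univ, true_and] at hp hq
      have h2 : p.2 = q.2 := mul_left_cancel (mul_right_cancel heq)
      exact Prod.ext (hp.2.trans hq.2.symm) h2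
    · intro b hb
      rw [Finset.mem_erase] at hb
      obtain ⟨hb1, hbH⟩ := hb
      refine ⟨(x, x * b * x⁻¹), ?_, by group⟩
      simp only [hP, Finset.mem_filter, Finset.mem_univ, true_and]
      refine ⟨⟨?_, ?_⟩, trivial⟩
      · intro hcontra
        apply hb1
        calc b = x⁻¹ * (x * b * x⁻¹) * x := by group
        _ = x⁻¹ * 1 * x := by rw [hcontra]
        _ = 1 := by group
      · have hrw : x⁻¹ * (x * b * x⁻¹) * x = b := by group
        rw [hrw]
        simpa [hHs, Set.mem_toFinset] using hbH
  have cardsnd : P.card = ∑ u : G, (P.filter (fun p => p.2 = u)).card :=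
    Finset.card_eq_sum_card_fiberwise (fun p _ => Finset.mem_univ _)
  have fibu : ∀ u : G, u ≠ 1 → Hs.card ≤ (P.filter (fun p => p.2 = u)).card := by
    intro u hu
    obtain ⟨x₀, hx₀⟩ := key u
    apply Finset.card_le_card_of_injOn (fun b => (x₀ * b, u))
    · intro b hb
      simp only [hP, Finset.mem_coe, Finset.mem_filter, Finset.mem_univ, true_and]
      refine ⟨⟨hu, ?_⟩, trivial⟩
      have hbH : b ∈ H := by simpa [hHs, Set.mem_toFinset] using hb
      have : (x₀ * b)⁻¹ * u * (x₀ * b) = b⁻¹ * (x₀⁻¹ * u * x₀) * b := by group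
      rw [this]
      exact H.mul_mem (H.mul_mem (H.inv_mem hbH) hx₀) hbH
    · intro b hb c hc heq
      have := congrArg Prod.fst heq
      simpa using this
  have lower : (Fintype.card G - 1) * Hs.card ≤ P.card := by
    rw [cardsnd]
    calc (Fintype.card G - 1) * Hs.card
        = ∑ u ∈ Finset.univ.erase (1 : G), Hs.card := by
          rw [Finset.sum_const, Finset.card_erase_of_mem (Finset.mem_univ _),
            Finset.card_univ, smul_eq_mul]
      _ ≤ ∑ u ∈ Finset.univ.erase (1 : G), (P.filter (fun p => p.2 = u)).card := by
          apply Finset.sum_le_sum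
          intro u hu
          exact fibu u (Finset.mem_erase.mp hu).1
      _ ≤ ∑ u : G, (P.filter (fun p => p.2 = u)).card :=
          Finset.sum_le_sum_of_subset (Finset.subset_univ _)
  have upper : P.card = Fintype.card G * (Hs.card - 1) := by
    rw [cardfst]
    simp [fibx, Finset.sum_const, Finset.card_univ, mul_comm]
  have hineq : (Fintype.card G - 1) * Hs.card ≤ Fintype.card G * (Hs.card - 1) := by
    rw [← upper]; exact lower
  have hm1 : 1 ≤ Fintype.card G := Fintype.card_pos
  have hcard : Fintype.card G ≤ Hs.card := by
    have e1 : (Fintype.card G - 1) * Hs.card = Fintype.card G * Hs.card - Hs.card := by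
      rw [Nat.sub_mul, one_mul]
    have e2 : Fintype.card G * (Hs.card - 1) = Fintype.card G * Hs.card - Fintype.card G := by
      rw [Nat.mul_sub, mul_one]
    rw [e1, e2] at hineq
    have hle1 : Hs.card ≤ Fintype.card G * Hs.card := Nat.le_mul_of_pos_left _ hm1
    have hle2 : Fintype.card G ≤ Fintype.card G * Hs.card := Nat.le_mul_of_pos_right _ hn1
    omega
  have hHtop : Hs = Finset.univ := by
    apply Finset.eq_univ_of_card
    exact le_antisymm (Finset.card_le_univ _) (by simpa [Finset.card_univ] using hcard)
  rw [Subgroup.mem_center_iff]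
  intro b
  have hbH : b ∈ H := by
    have : b ∈ Hs := hHtop ▸ Finset.mem_univ b
    simpa [hHs, Set.mem_toFinset] using this
  rw [Subgroup.mem_centralizer_iff] at hbH
  exact (hbH g rfl).symm
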